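/- Let V₁,...,V_n be independent random variables, τ₁ ≥ max{τ₂,...,τ_n} thresholds, t < τ₁, and k ≤ n/2 a positive integer. Then Σ_{i∈[n]} P(V_i > t) / (1 - (1/n)·Σ_{l∈[k]} P(V_i > τ_l)) ≥ P(max_{i∈[n]} V_i > t) / (1 - (k/n)·P(max_{i∈[n]} V_i > τ₁)). -/

import Mathlib

open MeasureTheory ProbabilityTheory

lemma two_var' (c p P q Q : ℝ) (hc0 : 0 ≤ c) (hc : c ≤ 1/2)
    (hq0 : 0 ≤ q) (hqp : q ≤ p) (hp1 : p ≤ 1)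
    (hQ0 : 0 ≤ Q) (hQP : Q ≤ P) (hP1 : P ≤ 1) :
    (p + P - p*P)/(1 - c*(q + Q - q*Q)) ≤ p/(1-c*q) + P/(1-c*Q) := by
  have hq1 : q ≤ 1 := hqp.trans hp1
  have hQ1 : Q ≤ 1 := hQP.trans hP1
  have hp0 : 0 ≤ p := hq0.trans hqp
  have hP0 : 0 ≤ P := hQ0.trans hQP
  have d1 : (0:ℝ) < 1 - c*q := by nlinarith
  have d2 : (0:ℝ) < 1 - c*Q := by nlinarith
  have d : (0:ℝ) < 1 - c*(q + Q - q*Q) := by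
    nlinarith [mul_nonneg (sub_nonneg.2 hq1) (sub_nonneg.2 hQ1)]
  rw [div_add_div _ _ (ne_of_gt d1) (ne_of_gt d2), div_le_div_iff₀ d (mul_pos d1 d2)]
  have h1 : 0 ≤ c*(1-c)*(q*Q) :=
    mul_nonneg (mul_nonneg hc0 (by linarith)) (mul_nonneg hq0 hQ0)
  have h3 : p*Q + P*q ≤ 2*(p*P) := by nlinarith
  have h4 : 0 ≤ p + P - p*P := by nlinarith
  have h5 : 0 ≤ p*(1-c*Q) + P*(1-c*q) - (p + P - p*P) := by nlinarith [mul_nonneg hp0 hP0]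
  nlinarith [mul_nonneg h4 h1, mul_nonneg h5 d.le]

lemma key_ind' {ι : Type*} (c : ℝ) (hc0 : 0 ≤ c) (hc : c ≤ 1/2) (p q : ι → ℝ)
    (s : Finset ι)
    (hq0 : ∀ i ∈ s, 0 ≤ q i) (hqp : ∀ i ∈ s, q i ≤ p i) (hp1 : ∀ i ∈ s, p i ≤ 1) :
    (1 - ∏ i ∈ s, (1 - p i)) / (1 - c * (1 - ∏ i ∈ s, (1 - q i)))
      ≤ ∑ i ∈ s, p i / (1 - c * q i) := by
  induction s using Finset.cons_induction with
  | empty => simp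
  | cons a s ha ih =>
    simp only [Finset.prod_cons, Finset.sum_cons]
    have hq0' : ∀ i ∈ s, 0 ≤ q i := fun i hi => hq0 i (Finset.mem_cons_of_mem hi)
    have hqp' : ∀ i ∈ s, q i ≤ p i := fun i hi => hqp i (Finset.mem_cons_of_mem hi)
    have hp1' : ∀ i ∈ s, p i ≤ 1 := fun i hi => hp1 i (Finset.mem_cons_of_mem hi)
    have hPp0 : 0 ≤ ∏ i ∈ s, (1 - p i) :=
      Finset.prod_nonneg fun i hi => by linarith [hp1' i hi]
    have hPpPq : ∏ i ∈ s, (1 - p i) ≤ ∏ i ∈ s, (1 - q i) :=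
      Finset.prod_le_prod (fun i hi => by linarith [hp1' i hi])
        (fun i hi => by linarith [hqp' i hi])
    have hPq1 : ∏ i ∈ s, (1 - q i) ≤ 1 :=
      Finset.prod_le_one (fun i hi => by linarith [hqp' i hi, hp1' i hi])
        (fun i hi => by linarith [hq0' i hi])
    have ha0 := hq0 a (Finset.mem_cons_self a s)
    have hap := hqp a (Finset.mem_cons_self a s)
    have ha1 := hp1 a (Finset.mem_cons_self a s)
    have h2 := two_var' c (p a) (1 - ∏ i ∈ s, (1 - p i)) (q a) (1 - ∏ i ∈ s, (1 - q i))
      hc0 hc ha0 hap ha1 (by linarith) (by linarith) (by linarith)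
    calc (1 - (1 - p a) * ∏ i ∈ s, (1 - p i)) /
          (1 - c * (1 - (1 - q a) * ∏ i ∈ s, (1 - q i)))
        = (p a + (1 - ∏ i ∈ s, (1 - p i)) - p a * (1 - ∏ i ∈ s, (1 - p i))) /
          (1 - c * (q a + (1 - ∏ i ∈ s, (1 - q i)) - q a * (1 - ∏ i ∈ s, (1 - q i)))) := by
          ring_nf
      _ ≤ p a / (1 - c * q a) + (1 - ∏ i ∈ s, (1 - p i)) / (1 - c * (1 - ∏ i ∈ s, (1 - q i))) := h2
      _ ≤ p a / (1 - c * q a) + ∑ i ∈ s, p i / (1 - c * q i) := by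
          linarith [ih hq0' hqp' hp1']

lemma prob_union_eq' {Ω : Type*} [MeasurableSpace Ω] (μ : Measure Ω) [IsProbabilityMeasure μ]
    {n : ℕ} (V : Fin n → Ω → ℝ) (hVmeas : ∀ i, Measurable (V i))
    (hVindep : iIndepFun V μ) (s : ℝ) :
    (μ {ω | ∃ i, s < V i ω}).toReal
      = 1 - ∏ i : Fin n, (1 - (μ {ω | s < V i ω}).toReal) := by
  have hmeas : ∀ i : Fin n, MeasurableSet {ω | s < V i ω} := fun i =>
    (hVmeas i) measurableSet_Ioi
  have hset : {ω | ∃ i, s < V i ω} = ⋃ i, {ω | s < V i ω} := by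
    ext ω; simp
  have hcompl : ({ω | ∃ i, s < V i ω})ᶜ = ⋂ i, V i ⁻¹' Set.Iic s := by
    ext ω; simp [not_lt]
  have hind : μ (⋂ i, V i ⁻¹' Set.Iic s) = ∏ i, μ (V i ⁻¹' Set.Iic s) :=
    hVindep.meas_iInter (fun i => ⟨Set.Iic s, measurableSet_Iic, rfl⟩)
  have hmeasU : MeasurableSet {ω | ∃ i, s < V i ω} := by
    rw [hset]; exact MeasurableSet.iUnion hmeas
  have h1 : μ {ω | ∃ i, s < V i ω} = 1 - μ (⋂ i, V i ⁻¹' Set.Iic s) := by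
    rw [← hcompl, prob_compl_eq_one_sub hmeasU,
      ENNReal.sub_sub_cancel ENNReal.one_ne_top prob_le_one]
  have h2 : ∀ i : Fin n, μ (V i ⁻¹' Set.Iic s) = 1 - μ {ω | s < V i ω} := by
    intro i
    have : V i ⁻¹' Set.Iic s = ({ω | s < V i ω})ᶜ := by ext ω; simp [not_lt]
    rw [this, prob_compl_eq_one_sub (hmeas i)]
  have hprodle : ∏ i, μ (V i ⁻¹' Set.Iic s) ≤ 1 :=
    Finset.prod_le_one (fun _ _ => zero_le) (fun _ _ => prob_le_one)
  rw [h1, hind, ENNReal.toReal_sub_of_le hprodle ENNReal.one_ne_top, ENNReal.toReal_prod]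
  rw [ENNReal.toReal_one]
  congr 1
  refine Finset.prod_congr rfl fun i _ => ?_
  rw [h2 i, ENNReal.toReal_sub_of_le prob_le_one ENNReal.one_ne_top]
  simp

theorem stmt15 {Ω : Type*} [MeasurableSpace Ω] (μ : Measure Ω) [IsProbabilityMeasure μ]
    (n : ℕ) (hn : 0 < n) (V : Fin n → Ω → ℝ)
    (hVmeas : ∀ i, Measurable (V i))
    (hVindep : iIndepFun V μ)
    (τ : ℕ → ℝ)
    (hτ : ∀ l, 2 ≤ l → l ≤ n → τ l ≤ τ 1)
    (t : ℝ) (ht : t < τ 1)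
    (k : ℕ) (hk1 : 1 ≤ k) (hkn : 2 * k ≤ n) :
    ∑ i : Fin n, (μ {ω | t < V i ω}).toReal /
        (1 - (1 / n : ℝ) * ∑ l ∈ Finset.Icc 1 k, (μ {ω | τ l < V i ω}).toReal)
      ≥ (μ {ω | ∃ i, t < V i ω}).toReal /
          (1 - ((k : ℝ) / n) * (μ {ω | ∃ i, τ 1 < V i ω}).toReal) := by
  set p : Fin n → ℝ := fun i => (μ {ω | t < V i ω}).toReal with hp
  set q : Fin n → ℝ := fun i => (μ {ω | τ 1 < V i ω}).toReal with hq
  have hnpos : (0:ℝ) < n := by exact_mod_cast hn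
  set c : ℝ := (k : ℝ) / n with hcdef
  have hc0 : 0 ≤ c := by positivity
  have hc : c ≤ 1/2 := by
    rw [hcdef, div_le_iff₀ hnpos]
    have : (2:ℝ) * k ≤ n := by exact_mod_cast hkn
    linarith
  have hq0 : ∀ i, 0 ≤ q i := fun i => ENNReal.toReal_nonneg
  have hqp : ∀ i, q i ≤ p i := by
    intro i
    exact ENNReal.toReal_mono (measure_ne_top μ _)
      (measure_mono (fun ω hω => lt_trans ht hω))
  have hp1 : ∀ i, p i ≤ 1 := by
    intro i
    simpa using ENNReal.toReal_mono ENNReal.one_ne_top (prob_le_one (μ := μ))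
  have hq1 : ∀ i, q i ≤ 1 := fun i => (hqp i).trans (hp1 i)
  -- rewrite the RHS using independence
  rw [prob_union_eq' μ V hVmeas hVindep t, prob_union_eq' μ V hVmeas hVindep (τ 1)]
  have hkey := key_ind' c hc0 hc p q Finset.univ
    (fun i _ => hq0 i) (fun i _ => hqp i) (fun i _ => hp1 i)
  refine le_trans hkey (Finset.sum_le_sum ?_)
  intro i _
  -- termwise comparison
  have hterm : ∀ l ∈ Finset.Icc 1 k, q i ≤ (μ {ω | τ l < V i ω}).toReal := by
    intro l hl
    rw [Finset.mem_Icc] at hl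
    rcases eq_or_lt_of_le hl.1 with h1 | h1
    · simp [hq, ← h1]
    · have h2 : 2 ≤ l := h1
      have hln : l ≤ n := le_trans hl.2 (by omega)
      exact ENNReal.toReal_mono (measure_ne_top μ _)
        (measure_mono (fun ω hω => lt_of_le_of_lt (hτ l h2 hln) hω))
  have hterm1 : ∀ l ∈ Finset.Icc 1 k, (μ {ω | τ l < V i ω}).toReal ≤ 1 := by
    intro l _
    simpa using ENNReal.toReal_mono ENNReal.one_ne_top (prob_le_one (μ := μ))
  have hsum_ge : (k : ℝ) * q i ≤ ∑ l ∈ Finset.Icc 1 k, (μ {ω | τ l < V i ω}).toReal := by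
    have := Finset.card_nsmul_le_sum (Finset.Icc 1 k)
      (fun l => (μ {ω | τ l < V i ω}).toReal) (q i) hterm
    simpa [Nat.card_Icc, nsmul_eq_mul] using this
  have hsum_le : ∑ l ∈ Finset.Icc 1 k, (μ {ω | τ l < V i ω}).toReal ≤ (k : ℝ) := by
    calc ∑ l ∈ Finset.Icc 1 k, (μ {ω | τ l < V i ω}).toReal
        ≤ ∑ l ∈ Finset.Icc 1 k, (1:ℝ) := Finset.sum_le_sum hterm1
      _ = (k : ℝ) := by simp [Nat.card_Icc]
  have hd1 : (0:ℝ) < 1 - (1 / n : ℝ) * ∑ l ∈ Finset.Icc 1 k, (μ {ω | τ l < V i ω}).toReal := by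
    have h2kn : (2:ℝ) * k ≤ n := by exact_mod_cast hkn
    have : (1 / n : ℝ) * ∑ l ∈ Finset.Icc 1 k, (μ {ω | τ l < V i ω}).toReal
        ≤ (1/n) * k := by
      apply mul_le_mul_of_nonneg_left hsum_le (by positivity)
    have hkn2 : (1/n : ℝ) * k ≤ 1/2 := by
      rw [div_mul_eq_mul_div, one_mul, div_le_iff₀ hnpos]; linarith
    linarith
  have hle : 1 - (1 / n : ℝ) * ∑ l ∈ Finset.Icc 1 k, (μ {ω | τ l < V i ω}).toReal
      ≤ 1 - c * q i := by
    have : c * q i ≤ (1 / n : ℝ) * ∑ l ∈ Finset.Icc 1 k, (μ {ω | τ l < V i ω}).toReal := by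
      rw [hcdef]
      calc (k:ℝ)/n * q i = (1/n) * ((k:ℝ) * q i) := by ring
        _ ≤ (1/n) * ∑ l ∈ Finset.Icc 1 k, (μ {ω | τ l < V i ω}).toReal :=
          mul_le_mul_of_nonneg_left hsum_ge (by positivity)
    linarith
  exact div_le_div_of_nonneg_left (ENNReal.toReal_nonneg) hd1 hle |>.trans_eq rfl
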